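/- Let L(w) be the weighted Laplacian matrix of the complete graph on d vertices with symmetric positive edge weights w_{rs}. Then for x > 0, Det(xI + L(w)) = Σ_F x^{|roots(F)|} Π_{(r,s)∈F} w_{rs}, where the sum is over all rooted spanning forests F of the graph and |roots(F)| is the number of trees (roots) in F. -/

import Mathlib

open Finset
open scoped Classical

/-- The weighted Laplacian of the complete graph on `d` vertices:
`L_{rr} = Σ_{s ≠ r} w_{rs}` and `L_{rs} = −w_{rs}` for `r ≠ s`. -/
def weightedLaplacian (d : ℕ) (w : Fin d → Fin d → ℝ) : Matrix (Fin d) (Fin d) ℝ :=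
  fun r s => if r = s then ∑ t ∈ Finset.univ.erase r, w r t else -(w r s)

/-- A rooted spanning forest on `Fin d`: an acyclic graph together with a choice function
picking one root in each connected component. -/
def IsRootedSpanningForest {d : ℕ} (G : SimpleGraph (Fin d)) (root : Fin d → Fin d) : Prop :=
  G.IsAcyclic ∧ (∀ v, G.Reachable v (root v)) ∧ ∀ v u, G.Reachable v u → root v = root u

namespace MTT

variable {d : ℕ}

/-- functions with optional successor -/
abbrev OF (d : ℕ) := Fin d → Option (Fin d)

def stp (f : OF d) : Option (Fin d) → Option (Fin d) := fun o => o.bind f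

def iter (f : OF d) (n : ℕ) (v : Fin d) : Option (Fin d) := (stp f)^[n] (some v)

lemma iter_zero (f : OF d) (v : Fin d) : iter f 0 v = some v := rfl

lemma iter_one (f : OF d) (v : Fin d) : iter f 1 v = f v := rfl

lemma stp_none (f : OF d) : stp f none = none := rfl

lemma iter_add (f : OF d) (n m : ℕ) (v : Fin d) :
    iter f (n + m) v = (stp f)^[n] (iter f m v) :=
  Function.iterate_add_apply _ n m _

lemma iter_shift {f : OF d} {m : ℕ} {v u : Fin d} (h : iter f m v = some u) (n : ℕ) :
    iter f (n + m) v = iter f n u := by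
  rw [iter_add, h]; rfl

lemma iter_none_mono {f : OF d} {m : ℕ} {v : Fin d} (h : iter f m v = none) {n : ℕ}
    (hmn : m ≤ n) : iter f n v = none := by
  obtain ⟨k, rfl⟩ := Nat.exists_eq_add_of_le hmn
  rw [Nat.add_comm, iter_add, h]
  induction k with
  | zero => rfl
  | succ k ih =>
    rw [Function.iterate_succ_apply', ih (by omega)]; rfl

lemma iter_succ_front {f : OF d} {v c : Fin d} (h : f v = some c) (n : ℕ) :
    iter f (n + 1) v = iter f n c := by
  have h1 : iter f 1 v = some c := by rw [iter_one, h]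
  rw [iter_shift h1 n]

def NoCycle (f : OF d) : Prop := ∀ v, ∃ n, iter f n v = none

def Periodic (f : OF d) (v : Fin d) : Prop := ∃ n, 0 < n ∧ iter f n v = some v

lemma periodic_mul {f : OF d} {v : Fin d} {p : ℕ} (hp : iter f p v = some v) (k : ℕ) :
    iter f (k * p) v = some v := by
  induction k with
  | zero => simp [iter_zero]
  | succ k ih =>
    have h1 : (k + 1) * p = p + k * p := by ring
    rw [h1, iter_shift ih p, hp]

lemma not_periodic_of_noCycle {f : OF d} (hf : NoCycle f) (v : Fin d) : ¬ Periodic f v := by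
  rintro ⟨p, hp, hpv⟩
  obtain ⟨n, hn⟩ := hf v
  have h1 : iter f ((n + 1) * p) v = some v := periodic_mul hpv _
  have h2 : iter f ((n + 1) * p) v = none :=
    iter_none_mono hn (le_trans (Nat.le_add_right n 1) (Nat.le_mul_of_pos_right _ hp))
  rw [h1] at h2; exact nomatch h2

lemma exists_periodic_of_not_noCycle {f : OF d} (hf : ¬ NoCycle f) : ∃ v, Periodic f v := by
  rw [NoCycle] at hf
  push_neg at hf
  obtain ⟨v, hv⟩ := hf
  have hsome : ∀ n, (iter f n v).isSome := by
    intro n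
    cases h : iter f n v with
    | none => exact absurd h (hv n)
    | some u => rfl
  set g : Fin (d + 1) → Fin d := fun n => (iter f n v).get (hsome n) with hg
  have hcard : Fintype.card (Fin d) < Fintype.card (Fin (d + 1)) := by simp
  obtain ⟨a, b, hab, heq⟩ := Fintype.exists_ne_map_eq_of_card_lt g hcard
  have key : ∀ a b : Fin (d + 1), (a : ℕ) < (b : ℕ) → g a = g b → ∃ u, Periodic f u := by
    intro a b hlt he
    have ha : iter f (a : ℕ) v = some (g a) := by simp [hg]
    have hb : iter f (b : ℕ) v = some (g b) := by simp [hg]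
    refine ⟨g a, (b : ℕ) - (a : ℕ), by omega, ?_⟩
    have h2 := iter_shift ha ((b : ℕ) - (a : ℕ))
    rw [Nat.sub_add_cancel (le_of_lt hlt), hb] at h2
    exact h2.symm.trans (congrArg some he.symm)
  rcases hab.lt_or_gt with h | h
  · exact key a b h heq
  · exact key b a h heq.symm


/-! ### The canonical cycle of a function with a cycle -/

section Cycle

variable {f : OF d}

/-- existence of a periodic point -/
def HasPer (f : OF d) : Prop := ∃ v, Periodic f v

noncomputable def v0 (f : OF d) (hf : HasPer f) : Fin d := Classical.choose hf

noncomputable def per (f : OF d) (hf : HasPer f) : ℕ :=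
  Classical.choose (Classical.choose_spec hf)

lemma per_pos (f : OF d) (hf : HasPer f) : 0 < per f hf :=
  (Classical.choose_spec (Classical.choose_spec hf)).1

lemma iter_per (f : OF d) (hf : HasPer f) : iter f (per f hf) (v0 f hf) = some (v0 f hf) :=
  (Classical.choose_spec (Classical.choose_spec hf)).2

/-- the vertices on the canonical cycle -/
noncomputable def C0 (f : OF d) (hf : HasPer f) : Finset (Fin d) :=
  univ.filter (fun u => ∃ n, iter f n (v0 f hf) = some u)

lemma mem_C0 {hf : HasPer f} {u : Fin d} :
    u ∈ C0 f hf ↔ ∃ n, iter f n (v0 f hf) = some u := by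
  simp [C0]

lemma v0_mem_C0 (hf : HasPer f) : v0 f hf ∈ C0 f hf := mem_C0.mpr ⟨0, rfl⟩

lemma C0_nonempty (hf : HasPer f) : (C0 f hf).Nonempty := ⟨_, v0_mem_C0 hf⟩

lemma iter_per_of_mem_C0 {hf : HasPer f} {u : Fin d} (hu : u ∈ C0 f hf) :
    iter f (per f hf) u = some u := by
  obtain ⟨n, hn⟩ := mem_C0.mp hu
  have h1 := iter_shift (iter_per f hf) n
  rw [hn] at h1
  have h2 := iter_shift hn (per f hf)
  rw [Nat.add_comm] at h2
  rw [h1] at h2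
  exact h2.symm

lemma isSome_of_mem_C0 {hf : HasPer f} {u : Fin d} (hu : u ∈ C0 f hf) : (f u).isSome := by
  have hp := iter_per_of_mem_C0 hu
  have hpos := per_pos f hf
  cases h : f u with
  | none =>
    have h1 : iter f 1 u = none := by rw [iter_one, h]
    have := iter_none_mono h1 hpos
    rw [hp] at this; exact nomatch this
  | some c => rfl

lemma next_mem_C0 {hf : HasPer f} {u c : Fin d} (hu : u ∈ C0 f hf) (hc : f u = some c) :
    c ∈ C0 f hf := by
  obtain ⟨n, hn⟩ := mem_C0.mp hu
  refine mem_C0.mpr ⟨1 + n, ?_⟩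
  rw [iter_shift hn 1, iter_one, hc]

lemma injOn_C0 {hf : HasPer f} {a b : Fin d} (ha : a ∈ C0 f hf) (hb : b ∈ C0 f hf)
    (hab : f a = f b) : a = b := by
  cases hc : f a with
  | none =>
    have hs := isSome_of_mem_C0 ha
    rw [hc] at hs
    simp at hs
  | some c =>
    have hpos := per_pos f hf
    have key : ∀ u : Fin d, u ∈ C0 f hf → f u = some c →
        iter f (per f hf - 1) c = some u := by
      intro u hu hfu
      have h1 := iter_succ_front hfu (per f hf - 1)
      rw [Nat.sub_add_cancel hpos, iter_per_of_mem_C0 hu] at h1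
      exact h1.symm
    have h1 := key a ha hc
    have h2 := key b hb (hab ▸ hc)
    rw [h1] at h2
    exact (Option.some.injEq _ _ ▸ h2)

lemma reach_v0_of_mem_C0 {hf : HasPer f} {u : Fin d} (hu : u ∈ C0 f hf) :
    ∃ m, iter f m u = some (v0 f hf) := by
  obtain ⟨n, hn⟩ := mem_C0.mp hu
  have hN : iter f ((n + 1) * per f hf) (v0 f hf) = some (v0 f hf) :=
    periodic_mul (iter_per f hf) _
  have hge : n ≤ (n + 1) * per f hf := by
    have := per_pos f hf
    calc n ≤ n + 1 := Nat.le_succ n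
    _ ≤ (n + 1) * per f hf := Nat.le_mul_of_pos_right _ this
  refine ⟨(n + 1) * per f hf - n, ?_⟩
  have := iter_shift hn ((n + 1) * per f hf - n)
  rw [Nat.sub_add_cancel hge] at this
  rw [← this, hN]

lemma reach_of_mem_C0 {hf : HasPer f} {u z : Fin d} (hu : u ∈ C0 f hf) (hz : z ∈ C0 f hf) :
    ∃ m, iter f m u = some z := by
  obtain ⟨m1, hm1⟩ := reach_v0_of_mem_C0 hu
  obtain ⟨n, hn⟩ := mem_C0.mp hz
  exact ⟨n + m1, by rw [iter_shift hm1 n, hn]⟩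

/-- the underlying function of the cycle permutation -/
noncomputable def tfun (f : OF d) (hf : HasPer f) : Fin d → Fin d :=
  fun u => if h : u ∈ C0 f hf then (f u).get (isSome_of_mem_C0 h) else u

lemma tfun_spec {hf : HasPer f} {u : Fin d} (hu : u ∈ C0 f hf) :
    f u = some (tfun f hf u) := by
  simp [tfun, hu]

lemma tfun_not_mem {hf : HasPer f} {u : Fin d} (hu : u ∉ C0 f hf) : tfun f hf u = u := by
  simp [tfun, hu]

lemma tfun_mem_C0 {hf : HasPer f} {u : Fin d} (hu : u ∈ C0 f hf) :
    tfun f hf u ∈ C0 f hf := next_mem_C0 hu (tfun_spec hu)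

lemma tfun_injective (f : OF d) (hf : HasPer f) : Function.Injective (tfun f hf) := by
  intro a b hab
  by_cases ha : a ∈ C0 f hf <;> by_cases hb : b ∈ C0 f hf
  · refine injOn_C0 ha hb ?_
    rw [tfun_spec ha, tfun_spec hb, hab]
  · exfalso
    rw [tfun_not_mem hb] at hab
    exact hb (hab ▸ tfun_mem_C0 ha)
  · exfalso
    rw [tfun_not_mem ha] at hab
    exact ha (hab ▸ tfun_mem_C0 hb)
  · rw [tfun_not_mem ha, tfun_not_mem hb] at hab
    exact hab

noncomputable def tperm (f : OF d) (hf : HasPer f) : Equiv.Perm (Fin d) :=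
  Equiv.ofBijective (tfun f hf) (Finite.injective_iff_bijective.mp (tfun_injective f hf))

lemma tperm_apply (f : OF d) (hf : HasPer f) (u : Fin d) :
    tperm f hf u = tfun f hf u := rfl

lemma tperm_spec {hf : HasPer f} {u : Fin d} (hu : u ∈ C0 f hf) :
    f u = some (tperm f hf u) := tfun_spec hu

lemma tperm_mem_C0 {hf : HasPer f} {u : Fin d} (hu : u ∈ C0 f hf) :
    tperm f hf u ∈ C0 f hf := tfun_mem_C0 hu

lemma tperm_ne {hf : HasPer f} (hself : ∀ v, f v ≠ some v) {u : Fin d} (hu : u ∈ C0 f hf) :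
    tperm f hf u ≠ u := by
  intro h
  exact hself u ((tperm_spec hu).trans (by rw [h]))

lemma tperm_support (hf : HasPer f) (hself : ∀ v, f v ≠ some v) :
    (tperm f hf).support = C0 f hf := by
  ext u
  simp only [Equiv.Perm.mem_support]
  constructor
  · intro h
    by_contra hu
    exact h (tfun_not_mem hu)
  · intro hu
    exact tperm_ne hself hu

lemma iter_eq_tperm_pow {hf : HasPer f} {u : Fin d} (hu : u ∈ C0 f hf) (n : ℕ) :
    iter f n u = some (((tperm f hf) ^ n) u) := by
  induction n generalizing u with
  | zero => simp [iter_zero]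
  | succ n ih =>
    have h1 : iter f (n + 1) u = iter f n (tperm f hf u) :=
      iter_succ_front (tperm_spec hu) n
    rw [h1, ih (tperm_mem_C0 hu), pow_succ, Equiv.Perm.mul_apply]

lemma tperm_isCycle (hf : HasPer f) (hself : ∀ v, f v ≠ some v) :
    (tperm f hf).IsCycle := by
  refine ⟨v0 f hf, tperm_ne hself (v0_mem_C0 hf), ?_⟩
  intro b hb
  have hbC : b ∈ C0 f hf := by
    by_contra h
    exact hb (tfun_not_mem h)
  obtain ⟨n, hn⟩ := mem_C0.mp hbC
  have := iter_eq_tperm_pow (v0_mem_C0 hf) n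
  rw [hn] at this
  refine ⟨(n : ℤ), ?_⟩
  have hbe : ((tperm f hf) ^ n) (v0 f hf) = b := by
    have := this.symm
    simpa using this
  simpa [zpow_natCast] using hbe

lemma tperm_sign (hf : HasPer f) (hself : ∀ v, f v ≠ some v) :
    Equiv.Perm.sign (tperm f hf) = -(-1) ^ (C0 f hf).card := by
  rw [(tperm_isCycle hf hself).sign, tperm_support hf hself]

end Cycle


/-! ### Good pairs and the sign-reversing involution -/

section Involution

variable {f : OF d} {σ : Equiv.Perm (Fin d)}

def Good (σ : Equiv.Perm (Fin d)) (f : OF d) : Prop :=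
  (∀ v, f v ≠ some v) ∧ ∀ v, σ v ≠ v → f v = some (σ v)

lemma supp_closed (hg : Good σ f) {m : ℕ} :
    ∀ {u z : Fin d}, u ∈ σ.support → iter f m u = some z → z ∈ σ.support := by
  induction m with
  | zero =>
    intro u z hu h
    rw [iter_zero] at h
    exact (Option.some.injEq _ _ ▸ h) ▸ hu
  | succ m ih =>
    intro u z hu h
    have hfu : f u = some (σ u) := hg.2 u (Equiv.Perm.mem_support.mp hu)
    rw [iter_succ_front hfu] at h
    exact ih (Equiv.Perm.apply_mem_support.mpr hu) h

lemma C0_subset_or_disjoint (hg : Good σ f) (hf : HasPer f) :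
    C0 f hf ⊆ σ.support ∨ ∀ u ∈ C0 f hf, u ∉ σ.support := by
  by_cases h : ∃ u ∈ C0 f hf, u ∈ σ.support
  · obtain ⟨u, hu, hus⟩ := h
    left
    intro z hz
    obtain ⟨m, hm⟩ := reach_of_mem_C0 hu hz
    exact supp_closed hg hus hm
  · push_neg at h
    exact Or.inr h

lemma tperm_inv_mem_C0 {hf : HasPer f} {v : Fin d} (hv : v ∈ C0 f hf) :
    (tperm f hf)⁻¹ v ∈ C0 f hf := by
  by_contra h
  have h1 : tperm f hf ((tperm f hf)⁻¹ v) = (tperm f hf)⁻¹ v := tfun_not_mem h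
  rw [← Equiv.Perm.mul_apply, mul_inv_cancel, Equiv.Perm.one_apply] at h1
  exact h (h1 ▸ hv)

lemma tperm_inv_not_mem {hf : HasPer f} {v : Fin d} (hv : v ∉ C0 f hf) :
    (tperm f hf)⁻¹ v = v := by
  rw [Equiv.Perm.inv_eq_iff_eq]
  exact (tfun_not_mem hv).symm

lemma tperm_not_mem {hf : HasPer f} {v : Fin d} (hv : v ∉ C0 f hf) :
    tperm f hf v = v := tfun_not_mem hv

noncomputable def invo (σ : Equiv.Perm (Fin d)) (f : OF d) (hf : HasPer f) :
    Equiv.Perm (Fin d) :=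
  if C0 f hf ⊆ σ.support then σ * (tperm f hf)⁻¹ else σ * tperm f hf

lemma sigma_eq_tperm (hg : Good σ f) {hf : HasPer f} (hsub : C0 f hf ⊆ σ.support)
    {v : Fin d} (hv : v ∈ C0 f hf) : σ v = tperm f hf v := by
  have h1 : f v = some (σ v) := hg.2 v (Equiv.Perm.mem_support.mp (hsub hv))
  have h2 : f v = some (tperm f hf v) := tperm_spec hv
  rw [h1] at h2
  exact Option.some.injEq _ _ ▸ h2

lemma case1_mem (hg : Good σ f) {hf : HasPer f} (hsub : C0 f hf ⊆ σ.support)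
    {v : Fin d} (hv : v ∈ C0 f hf) : (σ * (tperm f hf)⁻¹) v = v := by
  have h1 : (tperm f hf)⁻¹ v ∈ C0 f hf := tperm_inv_mem_C0 hv
  rw [Equiv.Perm.mul_apply, sigma_eq_tperm hg hsub h1, ← Equiv.Perm.mul_apply, mul_inv_cancel,
    Equiv.Perm.one_apply]

lemma case1_not_mem {hf : HasPer f} {v : Fin d} (hv : v ∉ C0 f hf) :
    (σ * (tperm f hf)⁻¹) v = σ v := by
  rw [Equiv.Perm.mul_apply, tperm_inv_not_mem hv]

lemma case1_support (hg : Good σ f) {hf : HasPer f} (hsub : C0 f hf ⊆ σ.support) :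
    (σ * (tperm f hf)⁻¹).support = σ.support \ C0 f hf := by
  ext v
  by_cases hv : v ∈ C0 f hf
  · simp only [Equiv.Perm.mem_support, case1_mem hg hsub hv, mem_sdiff]
    simp [hv]
  · simp only [Equiv.Perm.mem_support, case1_not_mem (σ := σ) hv, mem_sdiff, hv]
    simp

lemma case1_good (hg : Good σ f) {hf : HasPer f} (hsub : C0 f hf ⊆ σ.support) :
    Good (σ * (tperm f hf)⁻¹) f := by
  refine ⟨hg.1, fun v hv => ?_⟩
  by_cases h : v ∈ C0 f hf
  · exact absurd (case1_mem hg hsub h) hv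
  · rw [case1_not_mem (σ := σ) h] at hv ⊢
    exact hg.2 v hv

lemma case2_mem {hf : HasPer f} (hdis : ∀ u ∈ C0 f hf, u ∉ σ.support)
    {v : Fin d} (hv : v ∈ C0 f hf) : (σ * tperm f hf) v = tperm f hf v := by
  have h1 : tperm f hf v ∈ C0 f hf := tperm_mem_C0 hv
  rw [Equiv.Perm.mul_apply, Equiv.Perm.notMem_support.mp (hdis _ h1)]

lemma case2_not_mem {hf : HasPer f} {v : Fin d} (hv : v ∉ C0 f hf) :
    (σ * tperm f hf) v = σ v := by
  rw [Equiv.Perm.mul_apply, tperm_not_mem hv]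

lemma case2_support {hf : HasPer f} (hdis : ∀ u ∈ C0 f hf, u ∉ σ.support)
    (hself : ∀ v, f v ≠ some v) :
    (σ * tperm f hf).support = σ.support ∪ C0 f hf := by
  ext v
  by_cases hv : v ∈ C0 f hf
  · simp only [Equiv.Perm.mem_support, case2_mem hdis hv, mem_union]
    have := tperm_ne hself hv
    simp [hv, this]
  · simp only [Equiv.Perm.mem_support, case2_not_mem (σ := σ) hv, mem_union, hv]
    simp

lemma case2_good (hg : Good σ f) {hf : HasPer f}
    (hdis : ∀ u ∈ C0 f hf, u ∉ σ.support) : Good (σ * tperm f hf) f := by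
  refine ⟨hg.1, fun v hv => ?_⟩
  by_cases h : v ∈ C0 f hf
  · rw [case2_mem hdis h]
    exact tperm_spec h
  · rw [case2_not_mem (σ := σ) h] at hv ⊢
    exact hg.2 v hv

lemma invo_good (hg : Good σ f) (hf : HasPer f) : Good (invo σ f hf) f := by
  unfold invo
  split_ifs with h
  · exact case1_good hg h
  · rcases C0_subset_or_disjoint hg hf with h' | h'
    · exact absurd h' h
    · exact case2_good hg h'

lemma invo_invo (hg : Good σ f) (hf : HasPer f) :
    invo (invo σ f hf) f hf = σ := by
  unfold invo
  split_ifs with h1 h2 h2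
  · -- case 1 then claimed subset again : contradiction
    exfalso
    have := h2 (v0_mem_C0 hf)
    rw [Equiv.Perm.mem_support] at this
    exact this (case1_mem hg h1 (v0_mem_C0 hf))
  · group
  · group
  · -- case 2 then claimed non-subset : contradiction
    exfalso
    rcases C0_subset_or_disjoint hg hf with h' | h'
    · exact h1 h'
    · refine h2 ?_
      intro v hv
      rw [Equiv.Perm.mem_support, case2_mem h' hv]
      exact tperm_ne hg.1 hv

lemma invo_ne (hg : Good σ f) (hf : HasPer f) : invo σ f hf ≠ σ := by
  unfold invo
  split_ifs with h
  · intro he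
    have h1 : σ (v0 f hf) = v0 f hf := by
      conv_lhs => rw [← he]
      exact case1_mem hg h (v0_mem_C0 hf)
    exact Equiv.Perm.mem_support.mp (h (v0_mem_C0 hf)) h1
  · rcases C0_subset_or_disjoint hg hf with h' | h'
    · exact absurd h' h
    · intro he
      have h1 : (σ * tperm f hf) (v0 f hf) = tperm f hf (v0 f hf) :=
        case2_mem h' (v0_mem_C0 hf)
      rw [he] at h1
      have h2 : σ (v0 f hf) = v0 f hf :=
        Equiv.Perm.notMem_support.mp (h' _ (v0_mem_C0 hf))
      rw [h2] at h1
      exact tperm_ne hg.1 (v0_mem_C0 hf) h1.symm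

lemma neg_one_pow_sub {a b : ℕ} (h : b ≤ a) :
    ((-1 : ℝ)) ^ (a - b) = (-1) ^ a * (-1) ^ b := by
  have h1 : ((-1 : ℝ)) ^ (a - b) * (-1) ^ b = (-1) ^ a := by
    rw [← pow_add, Nat.sub_add_cancel h]
  have h2 : ((-1 : ℝ)) ^ b * (-1) ^ b = 1 := by
    rw [← pow_add]
    exact Even.neg_one_pow ⟨b, rfl⟩
  calc ((-1 : ℝ)) ^ (a - b) = ((-1 : ℝ)) ^ (a - b) * ((-1) ^ b * (-1) ^ b) := by
        rw [h2, mul_one]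
  _ = (((-1 : ℝ)) ^ (a - b) * (-1) ^ b) * (-1) ^ b := by ring
  _ = (-1) ^ a * (-1) ^ b := by rw [h1]

lemma invo_sign (hg : Good σ f) (hf : HasPer f) :
    ((Equiv.Perm.sign (invo σ f hf) : ℤ) : ℝ) * (-1) ^ (invo σ f hf).support.card =
      -(((Equiv.Perm.sign σ : ℤ) : ℝ) * (-1) ^ σ.support.card) := by
  have hsignτ : ((Equiv.Perm.sign (tperm f hf) : ℤ) : ℝ) = -(-1) ^ (C0 f hf).card := by
    rw [tperm_sign hf hg.1]
    push_cast
    ring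
  have h2 : ((-1 : ℝ)) ^ (C0 f hf).card * (-1) ^ (C0 f hf).card = 1 := by
    rw [← pow_add]
    exact Even.neg_one_pow ⟨(C0 f hf).card, rfl⟩
  unfold invo
  split_ifs with h
  · have hsupp : (σ * (tperm f hf)⁻¹).support = σ.support \ C0 f hf :=
      case1_support hg h
    have hcard : (σ * (tperm f hf)⁻¹).support.card = σ.support.card - (C0 f hf).card := by
      rw [hsupp, card_sdiff_of_subset h]
    have hsign : Equiv.Perm.sign (σ * (tperm f hf)⁻¹) =
        Equiv.Perm.sign σ * Equiv.Perm.sign (tperm f hf) := by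
      rw [map_mul, map_inv]
      congr 1
      simp
    rw [hcard, hsign, neg_one_pow_sub (card_le_card h)]
    push_cast
    calc ((Equiv.Perm.sign σ : ℤ) : ℝ) * ((Equiv.Perm.sign (tperm f hf) : ℤ) : ℝ) *
          ((-1) ^ σ.support.card * (-1) ^ (C0 f hf).card)
        = ((Equiv.Perm.sign σ : ℤ) : ℝ) * (-(-1) ^ (C0 f hf).card) *
          ((-1) ^ σ.support.card * (-1) ^ (C0 f hf).card) := by rw [hsignτ]
    _ = -(((Equiv.Perm.sign σ : ℤ) : ℝ) * (-1) ^ σ.support.card) *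
          ((-1) ^ (C0 f hf).card * (-1) ^ (C0 f hf).card) := by ring
    _ = -(((Equiv.Perm.sign σ : ℤ) : ℝ) * (-1) ^ σ.support.card) := by rw [h2, mul_one]
  · rcases C0_subset_or_disjoint hg hf with h' | h'
    · exact absurd h' h
    · have hsupp : (σ * tperm f hf).support = σ.support ∪ C0 f hf :=
        case2_support h' hg.1
      have hdisj : Disjoint σ.support (C0 f hf) := by
        rw [disjoint_right]
        intro a ha
        exact fun hc => h' a ha hc
      have hcard : (σ * tperm f hf).support.card = σ.support.card + (C0 f hf).card := by
        rw [hsupp, card_union_of_disjoint hdisj]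
      have hsign : Equiv.Perm.sign (σ * tperm f hf) =
          Equiv.Perm.sign σ * Equiv.Perm.sign (tperm f hf) := map_mul _ _ _
      rw [hcard, hsign, pow_add]
      push_cast
      calc ((Equiv.Perm.sign σ : ℤ) : ℝ) * ((Equiv.Perm.sign (tperm f hf) : ℤ) : ℝ) *
            ((-1) ^ σ.support.card * (-1) ^ (C0 f hf).card)
          = ((Equiv.Perm.sign σ : ℤ) : ℝ) * (-(-1) ^ (C0 f hf).card) *
            ((-1) ^ σ.support.card * (-1) ^ (C0 f hf).card) := by rw [hsignτ]
      _ = -(((Equiv.Perm.sign σ : ℤ) : ℝ) * (-1) ^ σ.support.card) *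
            ((-1) ^ (C0 f hf).card * (-1) ^ (C0 f hf).card) := by ring
      _ = -(((Equiv.Perm.sign σ : ℤ) : ℝ) * (-1) ^ σ.support.card) := by rw [h2, mul_one]

end Involution


/-! ### The determinant expansion -/

section Det

variable (x : ℝ) (w : Fin d → Fin d → ℝ)

noncomputable def Wt (f : OF d) : ℝ := ∏ v, (f v).elim x (w v)

lemma sum_cancel :
    ∑ p ∈ univ.filter (fun p : Equiv.Perm (Fin d) × OF d => Good p.1 p.2 ∧ ¬ NoCycle p.2),
      ((Equiv.Perm.sign p.1 : ℤ) : ℝ) * (-1) ^ p.1.support.card * Wt x w p.2 = 0 := by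
  refine Finset.sum_involution
    (fun p hp => (invo p.1 p.2
      (exists_periodic_of_not_noCycle (Finset.mem_filter.mp hp).2.2), p.2))
    ?_ ?_ ?_ ?_
  · intro p hp
    obtain ⟨-, hg, hnc⟩ := Finset.mem_filter.mp hp
    have := invo_sign hg (exists_periodic_of_not_noCycle hnc)
    simp only []
    rw [this]
    ring
  · intro p hp _
    obtain ⟨-, hg, hnc⟩ := Finset.mem_filter.mp hp
    intro he
    exact invo_ne hg (exists_periodic_of_not_noCycle hnc) (congrArg Prod.fst he)
  · intro p hp
    obtain ⟨-, hg, hnc⟩ := Finset.mem_filter.mp hp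
    refine Finset.mem_filter.mpr ⟨Finset.mem_univ _, ?_, hnc⟩
    exact invo_good hg (exists_periodic_of_not_noCycle hnc)
  · intro p hp
    obtain ⟨-, hg, hnc⟩ := Finset.mem_filter.mp hp
    have := invo_invo hg (exists_periodic_of_not_noCycle hnc)
    exact Prod.ext this rfl

/-- the finset of allowed values at `v` given `σ` -/
noncomputable def Tset (σ : Equiv.Perm (Fin d)) (v : Fin d) : Finset (Option (Fin d)) :=
  if σ v = v then insert none ((univ.erase v).image some) else {some (σ v)}

lemma mem_piFinset_iff_good (σ : Equiv.Perm (Fin d)) (f : OF d) :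
    f ∈ Fintype.piFinset (Tset σ) ↔ Good σ f := by
  rw [Fintype.mem_piFinset]
  constructor
  · intro h
    constructor
    · intro v hv
      have := h v
      rw [Tset] at this
      by_cases hσ : σ v = v
      · rw [if_pos hσ] at this
        rcases Finset.mem_insert.mp this with h' | h'
        · rw [hv] at h'; exact nomatch h'
        · obtain ⟨t, ht, hts⟩ := Finset.mem_image.mp h'
          rw [hv] at hts
          have : t = v := by injection hts
          exact (Finset.mem_erase.mp ht).1 this
      · rw [if_neg hσ] at this
        rw [hv] at this
        have : some v = some (σ v) := Finset.mem_singleton.mp this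
        exact hσ (by injection this with h'; exact h'.symm)
    · intro v hσ
      have := h v
      rw [Tset, if_neg hσ] at this
      exact Finset.mem_singleton.mp this
  · rintro ⟨h1, h2⟩ v
    rw [Tset]
    by_cases hσ : σ v = v
    · rw [if_pos hσ]
      cases hfv : f v with
      | none => exact Finset.mem_insert_self _ _
      | some t =>
        refine Finset.mem_insert_of_mem (Finset.mem_image.mpr ⟨t, ?_, rfl⟩)
        refine Finset.mem_erase.mpr ⟨?_, Finset.mem_univ _⟩
        intro ht
        exact h1 v (ht ▸ hfv)
    · rw [if_neg hσ]
      exact Finset.mem_singleton.mpr (h2 v hσ)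

lemma entry_eq (hsymm : ∀ r s, w r s = w s r) (σ : Equiv.Perm (Fin d)) (i : Fin d) :
    (x • (1 : Matrix (Fin d) (Fin d) ℝ) + weightedLaplacian d w) (σ i) i =
      (if σ i = i then (1 : ℝ) else -1) * ∑ o ∈ Tset σ i, o.elim x (w i) := by
  by_cases hσ : σ i = i
  · have hM : (x • (1 : Matrix (Fin d) (Fin d) ℝ) + weightedLaplacian d w) (σ i) i =
        x + ∑ t ∈ univ.erase i, w i t := by
      rw [hσ]
      simp [weightedLaplacian, Matrix.add_apply, Matrix.smul_apply, Matrix.one_apply_eq]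
    rw [hM, if_pos hσ, one_mul]
    simp only [Tset, if_pos hσ]
    rw [Finset.sum_insert (by simp)]
    rw [Finset.sum_image (by intro a _ b _ h; injection h)]
    rfl
  · have hM : (x • (1 : Matrix (Fin d) (Fin d) ℝ) + weightedLaplacian d w) (σ i) i =
        -(w (σ i) i) := by
      simp [weightedLaplacian, Matrix.add_apply, Matrix.smul_apply,
        Matrix.one_apply_ne hσ, hσ]
    rw [hM, if_neg hσ, Tset, if_neg hσ, Finset.sum_singleton]
    simp [hsymm (σ i) i]

lemma prod_entry_eq (hsymm : ∀ r s, w r s = w s r) (σ : Equiv.Perm (Fin d)) :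
    ∏ i, (x • (1 : Matrix (Fin d) (Fin d) ℝ) + weightedLaplacian d w) (σ i) i =
      (-1) ^ σ.support.card * ∑ f ∈ Fintype.piFinset (Tset σ), Wt x w f := by
  have h1 : ∀ i : Fin d, (x • (1 : Matrix (Fin d) (Fin d) ℝ) + weightedLaplacian d w) (σ i) i =
      (if σ i = i then (1 : ℝ) else -1) * ∑ o ∈ Tset σ i, o.elim x (w i) :=
    entry_eq x w hsymm σ
  rw [Finset.prod_congr rfl (fun i _ => h1 i), Finset.prod_mul_distrib]
  congr 1
  · rw [← Finset.prod_filter_mul_prod_filter_not univ (fun i => σ i = i)]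
    have ha : ∀ i ∈ filter (fun i => σ i = i) univ, (if σ i = i then (1 : ℝ) else -1) = 1 := by
      intro i hi; rw [if_pos (mem_filter.mp hi).2]
    have hb : ∀ i ∈ filter (fun i => ¬ σ i = i) univ,
        (if σ i = i then (1 : ℝ) else -1) = -1 := by
      intro i hi; rw [if_neg (mem_filter.mp hi).2]
    rw [Finset.prod_congr rfl ha, Finset.prod_congr rfl hb, Finset.prod_const,
      Finset.prod_const, one_pow, one_mul]
    have hs : filter (fun x => ¬ σ x = x) univ = σ.support := by
      ext a; simp [Equiv.Perm.mem_support]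
    rw [hs]
  · rw [Finset.prod_univ_sum]
    rfl

end Det


section MainDet

variable (x : ℝ) (w : Fin d → Fin d → ℝ)

lemma iter_succ_back (f : OF d) (m : ℕ) (v : Fin d) :
    iter f (m + 1) v = stp f (iter f m v) :=
  Function.iterate_succ_apply' _ _ _

lemma eq_one_of_noCycle {σ : Equiv.Perm (Fin d)} {f : OF d} (hg : Good σ f)
    (hnc : NoCycle f) : σ = 1 := by
  by_contra h
  obtain ⟨v, hv⟩ : ∃ v, σ v ≠ v := by
    by_contra h'
    push_neg at h'
    exact h (Equiv.ext h')
  have hsome : ∀ m, ∃ z, iter f m v = some z ∧ z ∈ σ.support := by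
    intro m
    induction m with
    | zero => exact ⟨v, rfl, Equiv.Perm.mem_support.mpr hv⟩
    | succ m ih =>
      obtain ⟨z, hz, hzs⟩ := ih
      refine ⟨σ z, ?_, Equiv.Perm.apply_mem_support.mpr hzs⟩
      rw [iter_succ_back, hz]
      show f z = some (σ z)
      exact hg.2 z (Equiv.Perm.mem_support.mp hzs)
  obtain ⟨n, hn⟩ := hnc v
  obtain ⟨z, hz, -⟩ := hsome n
  rw [hn] at hz
  exact nomatch hz

lemma det_eq_sum_noCycle (hsymm : ∀ r s, w r s = w s r) :
    Matrix.det (x • (1 : Matrix (Fin d) (Fin d) ℝ) + weightedLaplacian d w) =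
      ∑ f ∈ univ.filter (fun f : OF d => (∀ v, f v ≠ some v) ∧ NoCycle f), Wt x w f := by
  rw [Matrix.det_apply]
  have h1 : ∀ σ : Equiv.Perm (Fin d),
      (Equiv.Perm.sign σ) • ∏ i, (x • (1 : Matrix (Fin d) (Fin d) ℝ) +
          weightedLaplacian d w) (σ i) i
      = ∑ f ∈ univ.filter (fun f : OF d => Good σ f),
          ((Equiv.Perm.sign σ : ℤ) : ℝ) * (-1) ^ σ.support.card * Wt x w f := by
    intro σ
    rw [prod_entry_eq x w hsymm σ]
    have hset : Fintype.piFinset (Tset σ) = univ.filter (fun f : OF d => Good σ f) := by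
      ext f
      rw [Finset.mem_filter, mem_piFinset_iff_good]
      simp
    rw [hset]
    rw [Finset.mul_sum, Finset.smul_sum]
    refine Finset.sum_congr rfl fun f _ => ?_
    simp only [Units.smul_def, zsmul_eq_mul]
    push_cast
    ring
  rw [Finset.sum_congr rfl (fun σ _ => h1 σ)]
  have h2 : ∑ σ : Equiv.Perm (Fin d), ∑ f ∈ univ.filter (fun f : OF d => Good σ f),
        ((Equiv.Perm.sign σ : ℤ) : ℝ) * (-1) ^ σ.support.card * Wt x w f
      = ∑ p ∈ univ.filter (fun p : Equiv.Perm (Fin d) × OF d => Good p.1 p.2),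
        ((Equiv.Perm.sign p.1 : ℤ) : ℝ) * (-1) ^ p.1.support.card * Wt x w p.2 := by
    rw [Finset.sum_filter]
    rw [Fintype.sum_prod_type]
    refine Finset.sum_congr rfl fun σ _ => ?_
    rw [Finset.sum_filter]
  rw [h2]
  rw [← Finset.sum_filter_add_sum_filter_not
    (univ.filter (fun p : Equiv.Perm (Fin d) × OF d => Good p.1 p.2))
    (fun p => NoCycle p.2), Finset.filter_filter, Finset.filter_filter]
  rw [sum_cancel x w, add_zero]
  refine Finset.sum_nbij' (i := fun p => p.2) (j := fun f => (1, f)) ?_ ?_ ?_ ?_ ?_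
  · intro p hp
    obtain ⟨-, hg, hnc⟩ := Finset.mem_filter.mp hp
    exact Finset.mem_filter.mpr ⟨Finset.mem_univ _, hg.1, hnc⟩
  · intro f hf
    obtain ⟨-, hself, hnc⟩ := Finset.mem_filter.mp hf
    refine Finset.mem_filter.mpr ⟨Finset.mem_univ _, ⟨hself, fun v hv => ?_⟩, hnc⟩
    exact absurd rfl hv
  · intro p hp
    obtain ⟨-, hg, hnc⟩ := Finset.mem_filter.mp hp
    have := eq_one_of_noCycle hg hnc
    exact Prod.ext this.symm rfl
  · intro f _
    rfl
  · intro p hp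
    obtain ⟨-, hg, hnc⟩ := Finset.mem_filter.mp hp
    have h1 := eq_one_of_noCycle hg hnc
    rw [h1]
    simp

end MainDet


/-! ### From no-cycle functions to rooted forests -/

section Graph

open SimpleGraph

/-- the graph of a function -/
def Gf (f : OF d) : SimpleGraph (Fin d) := SimpleGraph.fromRel (fun a b => f a = some b)

lemma Gf_adj {f : OF d} {a b : Fin d} :
    (Gf f).Adj a b ↔ a ≠ b ∧ (f a = some b ∨ f b = some a) := by
  rw [Gf, SimpleGraph.fromRel_adj]

lemma adj_of_step {f : OF d} (hself : ∀ a, f a ≠ some a) {v u : Fin d} (h : f v = some u) :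
    (Gf f).Adj v u := by
  rw [Gf_adj]
  exact ⟨fun he => hself v (he ▸ h), Or.inl h⟩

lemma no_two_cycle {f : OF d} (hnc : NoCycle f) {v u : Fin d} (h1 : f v = some u)
    (h2 : f u = some v) : False := by
  refine not_periodic_of_noCycle hnc v ⟨2, by norm_num, ?_⟩
  have : iter f (1 + 1) v = iter f 1 u := iter_shift (by rw [iter_one, h1]) 1
  rw [iter_one, h2] at this
  exact this

lemma reach_iter {f : OF d} (hself : ∀ a, f a ≠ some a) :
    ∀ {n : ℕ} {v z : Fin d}, iter f n v = some z → (Gf f).Reachable v z := by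
  intro n
  induction n with
  | zero =>
    intro v z h
    rw [iter_zero, Option.some.injEq] at h
    exact h ▸ Reachable.refl v
  | succ n ih =>
    intro v z h
    cases hfv : f v with
    | none =>
      have h1 : iter f 1 v = none := by rw [iter_one, hfv]
      rw [iter_none_mono h1 (by omega)] at h
      exact nomatch h
    | some c =>
      rw [iter_succ_front hfv] at h
      exact ((adj_of_step hself hfv).reachable).trans (ih h)

/-- the root function of a no-cycle function (junk value otherwise) -/
noncomputable def rootOf (f : OF d) (v : Fin d) : Fin d :=
  if h : ∃ u, (∃ n, iter f n v = some u) ∧ f u = none then Classical.choose h else v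

lemma exists_end {f : OF d} (hnc : NoCycle f) (v : Fin d) :
    ∃ u, (∃ n, iter f n v = some u) ∧ f u = none := by
  have hn := Nat.find_spec (hnc v)
  set n := Nat.find (hnc v) with hdefn
  have hn0 : 0 < n := by
    rcases Nat.eq_zero_or_pos n with h | h
    · rw [h] at hn
      exact (Option.some_ne_none _ hn).elim
    · exact h
  have hn1 : iter f (n - 1) v ≠ none := Nat.find_min (hnc v) (by omega)
  cases h : iter f (n - 1) v with
  | none => exact absurd h hn1
  | some u =>
    refine ⟨u, ⟨n - 1, h⟩, ?_⟩
    have : iter f ((n - 1) + 1) v = stp f (iter f (n - 1) v) := iter_succ_back f _ v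
    rw [Nat.sub_add_cancel hn0, hn, h] at this
    exact this.symm

lemma chain_le {f : OF d} {n m : ℕ} {v r z : Fin d} (h : iter f n v = some r)
    (hr : f r = none) (hm : iter f m v = some z) : m ≤ n := by
  by_contra hlt
  push_neg at hlt
  have h1 : iter f (n + 1) v = none := by
    rw [iter_succ_back, h]
    exact hr
  rw [iter_none_mono h1 (by omega)] at hm
  exact nomatch hm

lemma end_unique {f : OF d} {n n' : ℕ} {v r r' : Fin d} (h : iter f n v = some r)
    (hr : f r = none) (h' : iter f n' v = some r') (hr' : f r' = none) : r = r' := by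
  have h1 : n' ≤ n := chain_le h hr h'
  have h2 : n ≤ n' := chain_le h' hr' h
  have : n = n' := le_antisymm h2 h1
  rw [this, h'] at h
  injection h with h
  exact h.symm

lemma rootOf_spec {f : OF d} (hnc : NoCycle f) (v : Fin d) :
    (∃ n, iter f n v = some (rootOf f v)) ∧ f (rootOf f v) = none := by
  rw [rootOf, dif_pos (exists_end hnc v)]
  exact Classical.choose_spec (exists_end hnc v)

lemma rootOf_eq {f : OF d} (hnc : NoCycle f) {n : ℕ} {v r : Fin d}
    (h : iter f n v = some r) (hr : f r = none) : rootOf f v = r := by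
  obtain ⟨⟨m, hm⟩, hnone⟩ := rootOf_spec hnc v
  exact end_unique hm hnone h hr

lemma rootOf_none {f : OF d} (hnc : NoCycle f) {v : Fin d} (h : f v = none) :
    rootOf f v = v := rootOf_eq hnc (iter_zero f v) h

lemma rootOf_step {f : OF d} (hnc : NoCycle f) {v u : Fin d} (h : f v = some u) :
    rootOf f v = rootOf f u := by
  obtain ⟨⟨m, hm⟩, hnone⟩ := rootOf_spec hnc u
  exact rootOf_eq hnc (by rw [iter_succ_front h]; exact hm) hnone

lemma rootOf_reachable {f : OF d} (hself : ∀ a, f a ≠ some a) (hnc : NoCycle f) (v : Fin d) :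
    (Gf f).Reachable v (rootOf f v) := by
  obtain ⟨⟨m, hm⟩, -⟩ := rootOf_spec hnc v
  exact reach_iter hself hm

lemma rootOf_adj {f : OF d} (hnc : NoCycle f) {a b : Fin d} (h : (Gf f).Adj a b) :
    rootOf f a = rootOf f b := by
  rw [Gf_adj] at h
  rcases h.2 with h' | h'
  · exact rootOf_step hnc h'
  · exact (rootOf_step hnc h').symm

lemma rootOf_const {f : OF d} (hnc : NoCycle f) {v u : Fin d}
    (h : (Gf f).Reachable v u) : rootOf f v = rootOf f u := by
  obtain ⟨p⟩ := h
  induction p with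
  | nil => rfl
  | cons hadj p ih => exact (rootOf_adj hnc hadj).trans ih

/-- descendants of `v` : vertices whose chain passes through `v` -/
def Desc (f : OF d) (v : Fin d) : Set (Fin d) := {z | ∃ k, iter f k z = some v}

lemma self_mem_Desc (f : OF d) (v : Fin d) : v ∈ Desc f v := ⟨0, iter_zero f v⟩

lemma not_mem_Desc {f : OF d} (hnc : NoCycle f) {v u : Fin d} (h : f v = some u) :
    u ∉ Desc f v := by
  rintro ⟨k, hk⟩
  refine not_periodic_of_noCycle hnc v ⟨k + 1, by omega, ?_⟩
  rw [iter_succ_front h]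
  exact hk

lemma Gf_isAcyclic {f : OF d} (hself : ∀ a, f a ≠ some a) (hnc : NoCycle f) :
    (Gf f).IsAcyclic := by
  rw [SimpleGraph.isAcyclic_iff_forall_adj_isBridge]
  intro v u hadj
  -- every adjacency comes from a step, in one direction or the other;
  -- bridges are symmetric under swapping so wlog f v = some u
  have key : ∀ a b : Fin d, f a = some b → (Gf f).IsBridge s(a, b) := by
    intro a b hab
    rw [SimpleGraph.isBridge_iff]
    intro hreach
    -- walks in the deleted graph starting in `Desc f a` stay there
    have closed : ∀ {p q : Fin d}, (Gf f \ SimpleGraph.fromEdgeSet {s(a, b)}).Adj p q →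
        p ∈ Desc f a → q ∈ Desc f a := by
      intro p q hpq hp
      rw [SimpleGraph.sdiff_adj, SimpleGraph.fromEdgeSet_adj] at hpq
      obtain ⟨hGadj, hne⟩ := hpq
      have hpqne : p ≠ q := hGadj.ne
      rw [Gf_adj] at hGadj
      rcases hGadj.2 with hstep | hstep
      · -- f p = some q
        obtain ⟨k, hk⟩ := hp
        cases k with
        | zero =>
          rw [iter_zero, Option.some.injEq] at hk
          subst hk
          rw [hab] at hstep
          have : q = b := by injection hstep; omega
          subst this
          exact absurd (by simp [Sym2.eq_iff, hpqne]) hne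
        | succ k =>
          rw [iter_succ_front hstep] at hk
          exact ⟨k, hk⟩
      · -- f q = some p
        obtain ⟨k, hk⟩ := hp
        exact ⟨k + 1, by rw [iter_succ_front hstep]; exact hk⟩
    have walkkeeps : ∀ {p q : Fin d} (w : (Gf f \ SimpleGraph.fromEdgeSet {s(a, b)}).Walk p q),
        p ∈ Desc f a → q ∈ Desc f a := by
      intro p q wk
      induction wk with
      | nil => exact id
      | cons h w ih => exact fun hp => ih (closed h hp)
    obtain ⟨wk⟩ := hreach
    exact not_mem_Desc hnc hab (walkkeeps wk (self_mem_Desc f a))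
  rw [Gf_adj] at hadj
  rcases hadj.2 with h | h
  · exact key v u h
  · rw [Sym2.eq_swap]
    exact key u v h

lemma rootOf_rsf {f : OF d} (hself : ∀ a, f a ≠ some a) (hnc : NoCycle f) :
    IsRootedSpanningForest (Gf f) (rootOf f) :=
  ⟨Gf_isAcyclic hself hnc, rootOf_reachable hself hnc,
    fun _ _ h => rootOf_const hnc h⟩

end Graph


section ChainWalk

open SimpleGraph

noncomputable def walkTo (f : OF d) (hself : ∀ a, f a ≠ some a) :
    (n : ℕ) → (v z : Fin d) → iter f n v = some z → (Gf f).Walk v z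
  | 0, v, z, h =>
      ((by rw [iter_zero, Option.some.injEq] at h; exact h : v = z) ▸ SimpleGraph.Walk.nil)
  | (n+1), v, z, h =>
      if hfv : (f v).isSome then
        SimpleGraph.Walk.cons (adj_of_step hself (Option.some_get hfv).symm)
          (walkTo f hself n ((f v).get hfv) z
            (by rw [iter_succ_front (Option.some_get hfv).symm] at h; exact h))
      else
        absurd h (by
          have h1 : iter f 1 v = none := by
            rw [iter_one, Option.not_isSome_iff_eq_none.mp hfv]
          rw [iter_none_mono h1 (by omega)]
          exact fun hc => nomatch hc)

lemma walkTo_getVert_one {f : OF d} {hself : ∀ a, f a ≠ some a} {n : ℕ} {v z c : Fin d}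
    (hfv : f v = some c) (h : iter f (n + 1) v = some z) :
    (walkTo f hself (n + 1) v z h).getVert 1 = c := by
  have hs : (f v).isSome := by rw [hfv]; rfl
  rw [walkTo, dif_pos hs, SimpleGraph.Walk.getVert_cons_succ]
  simp [hfv]

lemma mem_support_walkTo {f : OF d} {hself : ∀ a, f a ≠ some a} :
    ∀ {n : ℕ} {v z a : Fin d} (h : iter f n v = some z),
      a ∈ (walkTo f hself n v z h).support → ∃ k, k ≤ n ∧ iter f k v = some a := by
  intro n
  induction n with
  | zero =>
    intro v z a h ha
    have hvz : v = z := by rw [iter_zero, Option.some.injEq] at h; exact h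
    subst hvz
    rw [walkTo] at ha
    simp only [SimpleGraph.Walk.support_nil, List.mem_singleton] at ha
    exact ⟨0, le_refl _, by rw [ha, iter_zero]⟩
  | succ n ih =>
    intro v z a h ha
    have hs : (f v).isSome := by
      cases hfv : f v with
      | none =>
        exfalso
        have h1 : iter f 1 v = none := by rw [iter_one, hfv]
        rw [iter_none_mono h1 (by omega)] at h
        exact nomatch h
      | some c => rfl
    rw [walkTo, dif_pos hs] at ha
    rw [SimpleGraph.Walk.support_cons, List.mem_cons] at ha
    rcases ha with ha | ha
    · exact ⟨0, by omega, by rw [ha, iter_zero]⟩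
    · obtain ⟨k, hk, hka⟩ := ih _ ha
      refine ⟨k + 1, by omega, ?_⟩
      rw [iter_succ_front (Option.some_get hs).symm]
      exact hka

lemma isPath_walkTo {f : OF d} {hself : ∀ a, f a ≠ some a} (hnc : NoCycle f) :
    ∀ {n : ℕ} {v z : Fin d} (h : iter f n v = some z),
      (walkTo f hself n v z h).IsPath := by
  intro n
  induction n with
  | zero =>
    intro v z h
    have hvz : v = z := by rw [iter_zero, Option.some.injEq] at h; exact h
    subst hvz
    rw [walkTo]
    exact SimpleGraph.Walk.IsPath.nil
  | succ n ih =>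
    intro v z h
    have hs : (f v).isSome := by
      cases hfv : f v with
      | none =>
        exfalso
        have h1 : iter f 1 v = none := by rw [iter_one, hfv]
        rw [iter_none_mono h1 (by omega)] at h
        exact nomatch h
      | some c => rfl
    rw [walkTo, dif_pos hs]
    rw [SimpleGraph.Walk.cons_isPath_iff]
    refine ⟨ih _, ?_⟩
    intro hv
    obtain ⟨k, -, hka⟩ := mem_support_walkTo (hself := hself) _ hv
    refine not_periodic_of_noCycle hnc v ⟨k + 1, by omega, ?_⟩
    rw [iter_succ_front (Option.some_get hs).symm]
    exact hka

end ChainWalk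

section ToFun

open SimpleGraph

noncomputable def toFun (G : SimpleGraph (Fin d)) (root : Fin d → Fin d) : OF d :=
  fun v =>
    if h : G.Reachable v (root v) ∧ v ≠ root v then
      some ((Classical.choice h.1).toPath.1.getVert 1)
    else none

variable {G : SimpleGraph (Fin d)} {root : Fin d → Fin d}

lemma toFun_none {v : Fin d} (hv : v = root v) : toFun G root v = none := by
  rw [toFun, dif_neg]
  intro h
  exact h.2 hv

lemma toFun_some_adj {a c : Fin d} (h : toFun G root a = some c) : G.Adj a c := by
  rw [toFun] at h
  split_ifs at h with hcond
  · have hadj : G.Adj a ((Classical.choice hcond.1).toPath.1.getVert 1) :=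
      SimpleGraph.Walk.adj_snd (SimpleGraph.Walk.not_nil_of_ne hcond.2)
    injection h with h'
    exact h' ▸ hadj

lemma toFun_eq_of_path (hG : G.IsAcyclic) {v r : Fin d} (hr : r = root v) (hv : v ≠ r)
    (q : G.Walk v r) (hq : q.IsPath) : toFun G root v = some (q.getVert 1) := by
  subst hr
  have h : G.Reachable v (root v) ∧ v ≠ root v := ⟨⟨q⟩, hv⟩
  rw [toFun, dif_pos h]
  have := hG.path_unique ((Classical.choice h.1).toPath) ⟨q, hq⟩
  rw [congrArg Subtype.val this]

lemma toFun_ne_some_self (v : Fin d) : toFun G root v ≠ some v := by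
  intro h
  exact (toFun_some_adj h).ne rfl

section WithRSF

variable (hG : G.IsAcyclic) (hreach : ∀ v, G.Reachable v (root v))
  (hconst : ∀ v u, G.Reachable v u → root v = root u)

include hG hreach hconst

lemma root_fix (v : Fin d) : root (root v) = root v :=
  (hconst v (root v) (hreach v)).symm

lemma toFun_chain :
    ∀ (k : ℕ) (v r : Fin d) (q : G.Walk v r), q.IsPath → q.length ≤ k → r = root v →
      ∃ n, iter (toFun G root) n v = some (root v) := by
  intro k
  induction k with
  | zero =>
    intro v r q hq hlen hr
    have hvr : v = root v := (SimpleGraph.Walk.eq_of_length_eq_zero (Nat.le_zero.mp hlen)).trans hr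
    exact ⟨0, by rw [iter_zero, ← hvr]⟩
  | succ k ih =>
    intro v r q hq hlen hr
    by_cases hv : v = r
    · have hvr : v = root v := hv.trans hr
      exact ⟨0, by rw [iter_zero, ← hvr]⟩
    · cases q with
      | nil => exact absurd rfl hv
      | @cons _ b _ hadj q' =>
        have htf : toFun G root v = some b := by
          have := toFun_eq_of_path hG hr hv (SimpleGraph.Walk.cons hadj q') hq
          rwa [SimpleGraph.Walk.getVert_cons_succ, SimpleGraph.Walk.getVert_zero] at this
        have hrb : root b = root v := hconst b v hadj.symm.reachable
        obtain ⟨n, hn⟩ := ih b r q' hq.of_cons (by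
          have := SimpleGraph.Walk.length_cons hadj q'
          omega) (by rw [hrb, ← hr])
        exact ⟨n + 1, by rw [iter_succ_front htf, hn, hrb]⟩

lemma toFun_reaches_root (v : Fin d) :
    ∃ n, iter (toFun G root) n v = some (root v) := by
  obtain ⟨p⟩ := hreach v
  exact toFun_chain hG hreach hconst p.toPath.1.length v (root v) p.toPath.1 p.toPath.2
    (le_refl _) rfl

lemma toFun_noCycle : NoCycle (toFun G root) := by
  intro v
  obtain ⟨n, hn⟩ := toFun_reaches_root hG hreach hconst v
  refine ⟨n + 1, ?_⟩
  rw [iter_succ_back, hn]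
  show toFun G root (root v) = none
  exact toFun_none (root_fix hG hreach hconst v).symm

lemma rootOf_toFun : rootOf (toFun G root) = root := by
  funext v
  obtain ⟨n, hn⟩ := toFun_reaches_root hG hreach hconst v
  exact rootOf_eq (toFun_noCycle hG hreach hconst) hn
    (toFun_none (root_fix hG hreach hconst v).symm)

lemma Gf_toFun : Gf (toFun G root) = G := by
  ext a b
  rw [Gf_adj]
  constructor
  · rintro ⟨hne, h | h⟩
    · exact toFun_some_adj h
    · exact (toFun_some_adj h).symm
  · intro hadj
    have hne : a ≠ b := hadj.ne
    refine ⟨hne, ?_⟩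
    have hrab : root a = root b := hconst a b hadj.reachable
    by_cases ha : a = root a
    · -- b points to a
      right
      have hrb : root b = a := by rw [← hrab, ← ha]
      have hb : b ≠ root b := by rw [hrb]; exact hne.symm
      have := toFun_eq_of_path hG (v := b) (r := a) hrb.symm hne.symm
        (SimpleGraph.Walk.cons hadj.symm SimpleGraph.Walk.nil) (by simp [hne.symm])
      rwa [SimpleGraph.Walk.getVert_cons_succ, SimpleGraph.Walk.getVert_zero] at this
    · by_cases hb : b = root b
      · left
        have hra : root a = b := by rw [hrab, ← hb]
        have := toFun_eq_of_path hG (v := a) (r := b) hra.symm hne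
          (SimpleGraph.Walk.cons hadj SimpleGraph.Walk.nil) (by simp [hne])
        rwa [SimpleGraph.Walk.getVert_cons_succ, SimpleGraph.Walk.getVert_zero] at this
      · -- both internal
        set pb : G.Path b (root b) := (Classical.choice (hreach b)).toPath with hpb
        by_cases hmem : a ∈ pb.1.support
        · right
          -- the path from b to root b starts with the edge to a
          have htk : pb.1.takeUntil a hmem = SimpleGraph.Walk.cons hadj.symm
              SimpleGraph.Walk.nil := by
            have h1 : (pb.1.takeUntil a hmem).IsPath := pb.2.takeUntil hmem
            have h2 : (SimpleGraph.Walk.cons hadj.symm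
                (SimpleGraph.Walk.nil : G.Walk a a)).IsPath := by simp [hne.symm]
            have := hG.path_unique ⟨pb.1.takeUntil a hmem, h1⟩ ⟨_, h2⟩
            exact congrArg Subtype.val this
          have hspec := pb.1.take_spec hmem
          have hgv : pb.1.getVert 1 = a := by
            rw [← hspec, SimpleGraph.Walk.getVert_append]
            rw [htk]
            simp
          have := toFun_eq_of_path hG (v := b) (r := root b) rfl hb pb.1 pb.2
          rw [hgv] at this
          exact this
        · left
          have hq : (SimpleGraph.Walk.cons hadj pb.1).IsPath := by
            rw [SimpleGraph.Walk.cons_isPath_iff]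
            exact ⟨pb.2, hmem⟩
          have hra : root b = root a := hrab.symm
          have hvr : a ≠ root b := by
            intro hc
            exact ha (hc.trans hra)
          have := toFun_eq_of_path hG (v := a) (r := root b) hra hvr
            (SimpleGraph.Walk.cons hadj pb.1) hq
          rwa [SimpleGraph.Walk.getVert_cons_succ, SimpleGraph.Walk.getVert_zero] at this

end WithRSF

lemma toFun_Gf {f : OF d} (hself : ∀ a, f a ≠ some a) (hnc : NoCycle f) :
    toFun (Gf f) (rootOf f) = f := by
  funext v
  cases hfv : f v with
  | none => exact toFun_none (rootOf_none hnc hfv).symm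
  | some u =>
    have hrsf := rootOf_rsf hself hnc
    obtain ⟨⟨n, hn⟩, hrnone⟩ := rootOf_spec hnc v
    have hv : v ≠ rootOf f v := by
      intro hc
      rw [← hc, hfv] at hrnone
      exact nomatch hrnone
    cases n with
    | zero =>
      exfalso
      rw [iter_zero, Option.some.injEq] at hn
      exact hv hn
    | succ n =>
      have := toFun_eq_of_path hrsf.1 (G := Gf f) (root := rootOf f) (v := v)
        (r := rootOf f v) rfl hv (walkTo f hself (n + 1) v (rootOf f v) hn)
        (isPath_walkTo hnc hn)
      rw [walkTo_getVert_one hfv] at this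
      exact this

end ToFun


section Weights

variable (x : ℝ) (w : Fin d → Fin d → ℝ)

lemma image_rootOf {f : OF d} (hnc : NoCycle f) :
    Finset.image (rootOf f) univ = univ.filter (fun v => f v = none) := by
  ext u
  simp only [Finset.mem_image, Finset.mem_filter, Finset.mem_univ, true_and]
  constructor
  · rintro ⟨v, -, rfl⟩
    exact (rootOf_spec hnc v).2
  · intro hu
    exact ⟨u, rootOf_none hnc hu⟩

lemma Wt_eq (hsymm : ∀ r s, w r s = w s r) {f : OF d} (hself : ∀ a, f a ≠ some a)
    (hnc : NoCycle f) :
    Wt x w f = x ^ (univ.filter (fun v => f v = none)).card *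
      ∏ q ∈ univ.filter (fun q : Fin d × Fin d => q.1 < q.2 ∧ (Gf f).Adj q.1 q.2),
        w q.1 q.2 := by
  rw [Wt, ← Finset.prod_filter_mul_prod_filter_not univ (fun v => f v = none)]
  congr 1
  · rw [Finset.prod_congr rfl (fun v hv => ?_), Finset.prod_const]
    rw [(Finset.mem_filter.mp hv).2]
    rfl
  · refine Finset.prod_nbij'
      (i := fun v => (f v).elim (v, v) (fun u => if v < u then (v, u) else (u, v)))
      (j := fun q => if f q.1 = some q.2 then q.1 else q.2) ?_ ?_ ?_ ?_ ?_
    · intro v hv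
      obtain ⟨u, hu⟩ := Option.ne_none_iff_exists'.mp (Finset.mem_filter.mp hv).2
      have hne : v ≠ u := fun he => hself v (he ▸ hu)
      beta_reduce
      rw [hu]
      simp only [Option.elim]
      rcases lt_or_gt_of_ne hne with hlt | hlt
      · rw [if_pos hlt]
        refine Finset.mem_filter.mpr ⟨Finset.mem_univ _, hlt, ?_⟩
        exact adj_of_step hself hu
      · rw [if_neg (not_lt_of_gt hlt)]
        refine Finset.mem_filter.mpr ⟨Finset.mem_univ _, hlt, ?_⟩
        exact (adj_of_step hself hu).symm
    · intro q hq
      obtain ⟨-, hlt, hadj⟩ := Finset.mem_filter.mp hq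
      rw [Gf_adj] at hadj
      beta_reduce
      by_cases hc : f q.1 = some q.2
      · rw [if_pos hc]
        refine Finset.mem_filter.mpr ⟨Finset.mem_univ _, ?_⟩
        rw [hc]
        exact fun he => nomatch he
      · rw [if_neg hc]
        have h2 : f q.2 = some q.1 := (hadj.2).resolve_left hc
        refine Finset.mem_filter.mpr ⟨Finset.mem_univ _, ?_⟩
        rw [h2]
        exact fun he => nomatch he
    · intro v hv
      obtain ⟨u, hu⟩ := Option.ne_none_iff_exists'.mp (Finset.mem_filter.mp hv).2
      have hne : v ≠ u := fun he => hself v (he ▸ hu)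
      beta_reduce
      rw [hu]
      simp only [Option.elim]
      rcases lt_or_gt_of_ne hne with hlt | hlt
      · simp only [if_pos hlt]
        beta_reduce
        rw [if_pos hu]
      · simp only [if_neg (not_lt_of_gt hlt)]
        beta_reduce
        have hntc : ¬ f u = some v := fun hc => no_two_cycle hnc hu hc
        rw [if_neg hntc]
    · intro q hq
      obtain ⟨-, hlt, hadj⟩ := Finset.mem_filter.mp hq
      rw [Gf_adj] at hadj
      beta_reduce
      by_cases hc : f q.1 = some q.2
      · rw [if_pos hc]
        beta_reduce
        rw [hc]
        simp only [Option.elim]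
        rw [if_pos hlt]
      · rw [if_neg hc]
        have h2 : f q.2 = some q.1 := (hadj.2).resolve_left hc
        beta_reduce
        rw [h2]
        simp only [Option.elim]
        rw [if_neg (not_lt_of_gt hlt)]
    · intro v hv
      obtain ⟨u, hu⟩ := Option.ne_none_iff_exists'.mp (Finset.mem_filter.mp hv).2
      have hne : v ≠ u := fun he => hself v (he ▸ hu)
      beta_reduce
      rw [hu]
      simp only [Option.elim]
      rcases lt_or_gt_of_ne hne with hlt | hlt
      · rw [if_pos hlt]
      · rw [if_neg (not_lt_of_gt hlt)]
        exact hsymm v u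

end Weights

end MTT

open MTT

/-- Principal Minors Matrix-Tree Theorem: for the weighted Laplacian `L(w)` of the complete
graph on `d` vertices with symmetric positive weights, and `x > 0`,
`det(xI + L(w)) = Σ_F x^{|roots(F)|} Π_{(r,s) ∈ F} w_{rs}`,
the sum being over all rooted spanning forests `F`. -/
theorem det_add_laplacian_eq_forest_sum (d : ℕ) (w : Fin d → Fin d → ℝ)
    (hsymm : ∀ r s, w r s = w s r) (hpos : ∀ r s, r ≠ s → 0 < w r s)
    (x : ℝ) (hx : 0 < x) :
    Matrix.det (x • (1 : Matrix (Fin d) (Fin d) ℝ) + weightedLaplacian d w) =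
      ∑ p ∈ Finset.univ.filter
          (fun p : SimpleGraph (Fin d) × (Fin d → Fin d) =>
            IsRootedSpanningForest p.1 p.2),
        x ^ (Finset.univ.image p.2).card *
          ∏ q ∈ Finset.univ.filter
              (fun q : Fin d × Fin d => q.1 < q.2 ∧ p.1.Adj q.1 q.2),
            w q.1 q.2 := by
  rw [MTT.det_eq_sum_noCycle x w hsymm]
  refine Finset.sum_nbij' (i := fun f => (Gf f, rootOf f))
    (j := fun p => toFun p.1 p.2) ?_ ?_ ?_ ?_ ?_
  · intro f hf
    obtain ⟨-, hself, hnc⟩ := Finset.mem_filter.mp hf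
    exact Finset.mem_filter.mpr ⟨Finset.mem_univ _, rootOf_rsf hself hnc⟩
  · intro p hp
    obtain ⟨-, hG, hreach, hconst⟩ := Finset.mem_filter.mp hp
    refine Finset.mem_filter.mpr ⟨Finset.mem_univ _, ?_, ?_⟩
    · exact fun v => toFun_ne_some_self v
    · exact toFun_noCycle hG hreach hconst
  · intro f hf
    obtain ⟨-, hself, hnc⟩ := Finset.mem_filter.mp hf
    exact toFun_Gf hself hnc
  · intro p hp
    obtain ⟨-, hG, hreach, hconst⟩ := Finset.mem_filter.mp hp
    exact Prod.ext (Gf_toFun hG hreach hconst) (rootOf_toFun hG hreach hconst)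
  · intro f hf
    obtain ⟨-, hself, hnc⟩ := Finset.mem_filter.mp hf
    rw [Wt_eq x w hsymm hself hnc]
    simp only []
    rw [image_rootOf hnc]
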